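/- Let {X_n : n ∈ ℕ} be a sequence of T₁ normal topological spaces with X_n a closed subspace of X_{n+1} for every n. Then the colimit X = colim_n X_n (whose underlying set is ⋃ X_n, with A closed iff A ∩ X_n closed in X_n for all n) is a T₁ normal space. -/

import Mathlib

open Set Topology

def IsKOmegaStructure {X : Type*} [TopologicalSpace X] (K : ℕ → Set X) : Prop :=
  (∀ n, IsCompact (K n)) ∧ (⋃ n, K n) = Set.univ ∧
    ∀ F : Set X, IsClosed F ↔ ∀ n, IsClosed (((↑) : K n → X) ⁻¹' F)

def IsCompactCoverMap {X Y : Type*} [TopologicalSpace X] [TopologicalSpace Y]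
    (f : X → Y) : Prop :=
  Continuous f ∧ Function.Surjective f ∧
    ∀ C : Set Y, IsCompact C → ∃ K : Set X, IsCompact K ∧ f '' K = C

/-- Pasting lemma: a map continuous on two closed sets is continuous on their union. -/
lemma auxContOnUnion {Z Y : Type*} [TopologicalSpace Z] [TopologicalSpace Y]
    {s t : Set Z} {g : Z → Y} (hs : IsClosed s) (ht : IsClosed t)
    (hgs : ContinuousOn g s) (hgt : ContinuousOn g t) : ContinuousOn g (s ∪ t) := by
  intro x hx
  have h1 : ContinuousWithinAt g s x := by
    by_cases h : x ∈ s
    · exact hgs x h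
    · exact continuousWithinAt_of_notMem_closure (by rwa [hs.closure_eq])
  have h2 : ContinuousWithinAt g t x := by
    by_cases h : x ∈ t
    · exact hgt x h
    · exact continuousWithinAt_of_notMem_closure (by rwa [ht.closure_eq])
  exact (h1.union h2).mono (subset_rfl)

theorem stmt8 {X : Type*} [TopologicalSpace X] (A : ℕ → Set X)
    (hmono : ∀ n, A n ⊆ A (n + 1)) (hunion : (⋃ n, A n) = Set.univ)
    (hT1 : ∀ n, T1Space (A n)) (hnorm : ∀ n, NormalSpace (A n))
    (hclosedsucc : ∀ n, IsClosed (((↑) : A (n + 1) → X) ⁻¹' (A n)))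
    (hcolim : ∀ F : Set X, IsClosed F ↔ ∀ n, IsClosed (((↑) : A n → X) ⁻¹' F)) :
    T1Space X ∧ NormalSpace X := by
  classical
  have hmem : ∀ x : X, ∃ n, x ∈ A n := by
    intro x
    have : x ∈ ⋃ n, A n := by rw [hunion]; trivial
    rwa [mem_iUnion] at this
  have hmono' : ∀ n m, n ≤ m → A n ⊆ A m := by
    intro n m h
    induction m, h using Nat.le_induction with
    | base => exact subset_rfl
    | succ m hm ih => exact ih.trans (hmono m)
  constructor
  · -- T1
    refine ⟨fun x => ?_⟩
    rw [hcolim]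
    intro n
    haveI := hT1 n
    have hsub : (((↑) : A n → X) ⁻¹' {x}).Subsingleton := by
      intro a ha b hb
      exact Subtype.ext (ha.trans hb.symm)
    exact hsub.isClosed
  · -- Normal
    constructor
    intro E F hE hF hEF
    -- property of partial Urysohn functions
    set P : ℕ → (X → ℝ) → Prop := fun n f =>
      ContinuousOn f (A n) ∧ (∀ x ∈ A n ∩ E, f x = 0) ∧ (∀ x ∈ A n ∩ F, f x = 1) ∧
        (∀ x ∈ A n, f x ∈ Icc (0:ℝ) 1) with hP
    have base : ∃ f, P 0 f := by
      haveI := hnorm 0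
      have hE0 : IsClosed (((↑) : A 0 → X) ⁻¹' E) := hE.preimage continuous_subtype_val
      have hF0 : IsClosed (((↑) : A 0 → X) ⁻¹' F) := hF.preimage continuous_subtype_val
      have hd : Disjoint (((↑) : A 0 → X) ⁻¹' E) (((↑) : A 0 → X) ⁻¹' F) :=
        Disjoint.preimage _ hEF
      obtain ⟨g, hg0, hg1, hg01⟩ := exists_continuous_zero_one_of_isClosed hE0 hF0 hd
      refine ⟨fun x => if h : x ∈ A 0 then g ⟨x, h⟩ else 0, ?_, ?_, ?_, ?_⟩
      · rw [continuousOn_iff_continuous_restrict]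
        have : (A 0).domRestrict (fun x => if h : x ∈ A 0 then g ⟨x, h⟩ else 0) = g := by
          funext z
          simp [Set.domRestrict]
        rw [this]
        exact g.continuous
      · intro x hx
        have := hg0 (show (⟨x, hx.1⟩ : A 0) ∈ ((↑) : A 0 → X) ⁻¹' E from hx.2)
        simpa [hx.1] using this
      · intro x hx
        have := hg1 (show (⟨x, hx.1⟩ : A 0) ∈ ((↑) : A 0 → X) ⁻¹' F from hx.2)
        simpa [hx.1] using this
      · intro x hx
        simpa [hx] using hg01 ⟨x, hx⟩
    have step : ∀ n (f : X → ℝ), P n f → ∃ g, P (n+1) g ∧ ∀ x ∈ A n, g x = f x := by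
      intro n f hf
      haveI := hnorm (n+1)
      obtain ⟨hfc, hfE, hfF, hfI⟩ := hf
      set ι : A (n+1) → X := (↑) with hι
      have hs : IsClosed (ι ⁻¹' (A n)) := hclosedsucc n
      have he : IsClosed (ι ⁻¹' E) := hE.preimage continuous_subtype_val
      have ht : IsClosed (ι ⁻¹' F) := hF.preimage continuous_subtype_val
      set g0 : A (n+1) → ℝ := fun z =>
        if (z : X) ∈ A n then f z else if (z : X) ∈ E then 0 else 1 with hg0def
      have hg0s : ∀ z ∈ ι ⁻¹' (A n), g0 z = f z := by
        intro z hz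
        have hz' : (z : X) ∈ A n := hz
        simp only [hg0def]; rw [if_pos hz']
      have hg0e : ∀ z ∈ ι ⁻¹' E, g0 z = 0 := by
        intro z hz
        have hz' : (z : X) ∈ E := hz
        simp only [hg0def]
        by_cases h : (z : X) ∈ A n
        · rw [if_pos h]; exact hfE _ ⟨h, hz'⟩
        · rw [if_neg h, if_pos hz']
      have hg0t : ∀ z ∈ ι ⁻¹' F, g0 z = 1 := by
        intro z hz
        have hz' : (z : X) ∈ F := hz
        simp only [hg0def]
        by_cases h : (z : X) ∈ A n
        · rw [if_pos h]; exact hfF _ ⟨h, hz'⟩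
        · rw [if_neg h, if_neg (fun hzE => Set.disjoint_left.mp hEF hzE hz')]
      have hcs : ContinuousOn g0 (ι ⁻¹' (A n)) := by
        have : ContinuousOn (f ∘ ι) (ι ⁻¹' (A n)) :=
          hfc.comp continuous_subtype_val.continuousOn (fun z hz => hz)
        exact this.congr hg0s
      have hce : ContinuousOn g0 (ι ⁻¹' E) :=
        continuousOn_const.congr hg0e
      have hct : ContinuousOn g0 (ι ⁻¹' F) :=
        continuousOn_const.congr hg0t
      set T : Set (A (n+1)) := (ι ⁻¹' (A n) ∪ ι ⁻¹' E) ∪ ι ⁻¹' F with hTdef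
      have hTclosed : IsClosed T := ((hs.union he).union ht)
      have hcT : ContinuousOn g0 T :=
        auxContOnUnion (hs.union he) ht (auxContOnUnion hs he hcs hce) hct
      obtain ⟨G, hG⟩ := ContinuousMap.exists_restrict_eq (Y := ℝ) hTclosed
        ⟨T.restrict g0, continuousOn_iff_continuous_restrict.mp hcT⟩
      have hGT : ∀ z (hz : z ∈ T), G z = g0 z := by
        intro z hz
        have := congrFun (congrArg DFunLike.coe hG) ⟨z, hz⟩
        exact this
      refine ⟨fun x => if h : x ∈ A (n+1) then max 0 (min 1 (G ⟨x, h⟩)) else 0,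
        ⟨?_, ?_, ?_, ?_⟩, ?_⟩
      · rw [continuousOn_iff_continuous_restrict]
        have : (A (n+1)).domRestrict (fun x => if h : x ∈ A (n+1) then max 0 (min 1 (G ⟨x, h⟩)) else 0)
            = fun z => max 0 (min 1 (G z)) := by
          funext z
          simp [Set.domRestrict]
        rw [this]
        exact continuous_const.max (continuous_const.min G.continuous)
      · intro x hx
        have hzT : (⟨x, hx.1⟩ : A (n+1)) ∈ T := Or.inl (Or.inr hx.2)
        have : G ⟨x, hx.1⟩ = 0 := (hGT _ hzT).trans (hg0e _ hx.2)
        simp [hx.1, this]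
      · intro x hx
        have hzT : (⟨x, hx.1⟩ : A (n+1)) ∈ T := Or.inr hx.2
        have : G ⟨x, hx.1⟩ = 1 := (hGT _ hzT).trans (hg0t _ hx.2)
        simp [hx.1, this]
      · intro x hx
        simp only [dif_pos hx]
        constructor
        · exact le_max_left _ _
        · exact max_le zero_le_one (min_le_left _ _)
      · intro x hx
        have hx1 : x ∈ A (n+1) := hmono n hx
        have hzT : (⟨x, hx1⟩ : A (n+1)) ∈ T := Or.inl (Or.inl hx)
        have hGv : G ⟨x, hx1⟩ = f x := (hGT _ hzT).trans (hg0s _ hx)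
        obtain ⟨h0, h1⟩ := hfI x hx
        simp only [dif_pos hx1]
        rw [hGv, min_eq_right h1, max_eq_right h0]
    -- build the sequence
    obtain ⟨f0, hf0⟩ := base
    choose step' hstep hcompat using step
    let seq : (n : ℕ) → {g : X → ℝ // P n g} := fun n =>
      Nat.rec ⟨f0, hf0⟩ (fun n p => ⟨step' n p.1 p.2, hstep n p.1 p.2⟩) n
    have hseqsucc : ∀ n, ∀ x ∈ A n, (seq (n+1)).1 x = (seq n).1 x := by
      intro n x hx
      exact hcompat n (seq n).1 (seq n).2 x hx
    have hchain : ∀ n m, n ≤ m → ∀ x ∈ A n, (seq m).1 x = (seq n).1 x := by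
      intro n m h
      induction m, h using Nat.le_induction with
      | base => intro x _; rfl
      | succ m hm ih =>
        intro x hx
        rw [hseqsucc m x (hmono' n m hm hx)]
        exact ih x hx
    choose idx hidx using hmem
    set φ : X → ℝ := fun x => (seq (idx x)).1 x with hφdef
    have hφeq : ∀ n, ∀ x ∈ A n, φ x = (seq n).1 x := by
      intro n x hx
      rcases le_total n (idx x) with h | h
      · exact hchain n (idx x) h x hx
      · exact (hchain (idx x) n h x (hidx x)).symm
    have hφcont : Continuous φ := by
      rw [continuous_iff_isClosed]
      intro C hC
      rw [hcolim]
      intro n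
      have h1 : ContinuousOn φ (A n) := ((seq n).2.1).congr (hφeq n)
      exact hC.preimage (continuousOn_iff_continuous_restrict.mp h1)
    have hφE : ∀ x ∈ E, φ x = 0 := fun x hx => (seq (idx x)).2.2.1 x ⟨hidx x, hx⟩
    have hφF : ∀ x ∈ F, φ x = 1 := fun x hx => (seq (idx x)).2.2.2.1 x ⟨hidx x, hx⟩
    refine ⟨φ ⁻¹' (Iio (1/2)), φ ⁻¹' (Ioi (1/2)), isOpen_Iio.preimage hφcont,
      isOpen_Ioi.preimage hφcont, ?_, ?_, ?_⟩
    · intro x hx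
      simp only [mem_preimage, mem_Iio, hφE x hx]
      norm_num
    · intro x hx
      simp only [mem_preimage, mem_Ioi, hφF x hx]
      norm_num
    · rw [Set.disjoint_left]
      intro x h1 h2
      simp only [mem_preimage, mem_Iio, mem_Ioi] at h1 h2
      exact lt_irrefl _ (h1.trans h2)
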